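/- For any profile of votes in the simplex S^m_b and any phantom system {f_0,...,f_n} with each f_k continuous and non-decreasing, f_k(0)=0, and f_k(1) ≥ b·(n-k)/n, there exists a time t* ∈ [0,1] such that the sum over alternatives j of the median of (p_{1,j},...,p_{n,j}, f_0(t*),...,f_n(t*)) equals b. -/

import Mathlib

/-- The median of `2n+1` real numbers: the `(n+1)`-st smallest. -/
noncomputable def medianR (n : ℕ) (v : Fin (2*n+1) → ℝ) : ℝ :=
  (Multiset.sort (Multiset.map v Finset.univ.val) (· ≤ ·)).getD n 0

/-- Merge `n` votes and `n+1` phantoms into one vector of `2n+1` values. -/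
def mergeVR (n : ℕ) (x : Fin n → ℝ) (y : Fin (n+1) → ℝ) : Fin (2*n+1) → ℝ :=
  fun i => if h : (i : ℕ) < n then x ⟨i, h⟩
           else y ⟨(i : ℕ) - n, by have := i.isLt; omega⟩

open scoped Classical

noncomputable def slist (n : ℕ) (v : Fin (2*n+1) → ℝ) : List ℝ :=
  Multiset.sort (Multiset.map v Finset.univ.val) (· ≤ ·)

lemma filter_card_eq (n : ℕ) (v : Fin (2*n+1) → ℝ) (Q : ℝ → Prop) :
    ((Finset.univ : Finset (Fin (2*n+1))).filter (fun i => Q (v i))).card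
      = (slist n v).countP (fun x => decide (Q x)) := by
  have h1 : ((slist n v : List ℝ) : Multiset ℝ) = Multiset.map v Finset.univ.val :=
    Multiset.sort_eq _ _
  rw [Finset.card_filter]
  rw [← Multiset.coe_countP]
  rw [h1]
  rw [Multiset.countP_map]
  simp [Multiset.countP_eq_card_filter, Finset.card_filter, Finset.filter]

lemma take_le (s : List ℝ) (hs : s.Pairwise (· ≤ ·)) {k : ℕ} (hk : k < s.length)
    (y : ℝ) (hy : y ∈ s.take (k+1)) : y ≤ s[k] := by
  rw [List.mem_iff_getElem] at hy
  obtain ⟨i, hi, rfl⟩ := hy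
  rw [List.getElem_take]
  exact hs.rel_get_of_le (a := ⟨i, by simp at hi; omega⟩) (b := ⟨k, hk⟩) (by simp at hi ⊢; omega)

lemma drop_ge (s : List ℝ) (hs : s.Pairwise (· ≤ ·)) {k : ℕ} (hk : k < s.length)
    (y : ℝ) (hy : y ∈ s.drop k) : s[k] ≤ y := by
  rw [List.mem_iff_getElem] at hy
  obtain ⟨i, hi, rfl⟩ := hy
  rw [List.getElem_drop]
  exact hs.rel_get_of_le (a := ⟨k, hk⟩) (b := ⟨k+i, by simp at hi; omega⟩) (by simp)

lemma countP_split (s : List ℝ) (p : ℝ → Bool) (k : ℕ) :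
    s.countP p = (s.take k).countP p + (s.drop k).countP p := by
  conv_lhs => rw [← List.take_append_drop k s]
  rw [List.countP_append]

lemma countP_ge_take (s : List ℝ) (p : ℝ → Bool) (k : ℕ) (hk : k ≤ s.length)
    (h : ∀ y ∈ s.take k, p y) : k ≤ s.countP p := by
  rw [countP_split s p k]
  have := List.countP_eq_length (p := p) (l := s.take k) |>.mpr h
  rw [this, List.length_take]
  omega

lemma countP_ge_drop (s : List ℝ) (p : ℝ → Bool) (k : ℕ)
    (h : ∀ y ∈ s.drop k, p y) : s.length - k ≤ s.countP p := by
  rw [countP_split s p k]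
  have := List.countP_eq_length (p := p) (l := s.drop k) |>.mpr h
  rw [this, List.length_drop]
  omega

lemma countP_le_take (s : List ℝ) (p : ℝ → Bool) (k : ℕ)
    (h : ∀ y ∈ s.drop k, ¬ p y) : s.countP p ≤ k := by
  rw [countP_split s p k]
  have : (s.drop k).countP p = 0 := List.countP_eq_zero.mpr h
  rw [this]
  have := List.countP_le_length (p := p) (l := s.take k)
  have h2 := List.length_take (i := k) (l := s)
  omega

lemma countP_le_drop (s : List ℝ) (p : ℝ → Bool) (k : ℕ)
    (h : ∀ y ∈ s.take k, ¬ p y) : s.countP p ≤ s.length - k := by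
  rw [countP_split s p k]
  have : (s.take k).countP p = 0 := List.countP_eq_zero.mpr h
  rw [this]
  have := List.countP_le_length (p := p) (l := s.drop k)
  have h2 := List.length_drop (i := k) (l := s)
  omega

lemma slist_length (n : ℕ) (v : Fin (2*n+1) → ℝ) : (slist n v).length = 2*n+1 := by
  simp [slist]

lemma slist_sorted (n : ℕ) (v : Fin (2*n+1) → ℝ) : (slist n v).Pairwise (· ≤ ·) :=
  Multiset.pairwise_sort _ _

lemma medianR_eq (n : ℕ) (v : Fin (2*n+1) → ℝ) :
    medianR n v = (slist n v)[n]'(by rw [slist_length]; omega) := by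
  rw [medianR]
  exact List.getD_eq_getElem _ _ (by
    rw [show (Multiset.sort (Multiset.map v Finset.univ.val) (· ≤ ·)).length = 2*n+1 from
      slist_length n v]; omega)

lemma card_le_median (n : ℕ) (v : Fin (2*n+1) → ℝ) :
    n+1 ≤ ((Finset.univ : Finset (Fin (2*n+1))).filter (fun i => v i ≤ medianR n v)).card := by
  rw [filter_card_eq n v (fun y => y ≤ medianR n v)]
  apply countP_ge_take _ _ (n+1) (by rw [slist_length]; omega)
  intro y hy
  simp only [decide_eq_true_eq]
  rw [medianR_eq]
  exact take_le _ (slist_sorted n v) _ y hy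

lemma card_ge_median (n : ℕ) (v : Fin (2*n+1) → ℝ) :
    n+1 ≤ ((Finset.univ : Finset (Fin (2*n+1))).filter (fun i => medianR n v ≤ v i)).card := by
  rw [filter_card_eq n v (fun y => medianR n v ≤ y)]
  have := countP_ge_drop (slist n v) (fun x => decide (medianR n v ≤ x)) n ?_
  · rw [slist_length] at this; omega
  intro y hy
  simp only [decide_eq_true_eq]
  rw [medianR_eq]
  exact drop_ge _ (slist_sorted n v) _ y hy

lemma le_median (n : ℕ) (v : Fin (2*n+1) → ℝ) (x : ℝ)
    (h : n+1 ≤ ((Finset.univ : Finset (Fin (2*n+1))).filter (fun i => x ≤ v i)).card) :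
    x ≤ medianR n v := by
  by_contra hc
  push_neg at hc
  rw [filter_card_eq n v (fun y => x ≤ y)] at h
  have := countP_le_drop (slist n v) (fun y => decide (x ≤ y)) (n+1) ?_
  · rw [slist_length] at this; omega
  intro y hy
  simp only [decide_eq_true_eq, not_le]
  calc y ≤ medianR n v := by
        rw [medianR_eq]; exact take_le _ (slist_sorted n v) _ y hy
    _ < x := hc

lemma median_le (n : ℕ) (v : Fin (2*n+1) → ℝ) (x : ℝ)
    (h : n+1 ≤ ((Finset.univ : Finset (Fin (2*n+1))).filter (fun i => v i ≤ x)).card) :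
    medianR n v ≤ x := by
  by_contra hc
  push_neg at hc
  rw [filter_card_eq n v (fun y => y ≤ x)] at h
  have := countP_le_take (slist n v) (fun y => decide (y ≤ x)) n ?_
  · omega
  intro y hy
  simp only [decide_eq_true_eq, not_le]
  calc x < medianR n v := hc
    _ ≤ y := by rw [medianR_eq]; exact drop_ge _ (slist_sorted n v) _ y hy

lemma powersetCard_ne (n : ℕ) :
    ((Finset.powersetCard (n+1) (Finset.univ : Finset (Fin (2*n+1))))).Nonempty :=
  Finset.powersetCard_nonempty.mpr (by simp; omega)

lemma mem_powersetCard_ne {n : ℕ} {S : Finset (Fin (2*n+1))}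
    (hS : S ∈ Finset.powersetCard (n+1) (Finset.univ : Finset (Fin (2*n+1)))) :
    S.Nonempty := by
  rw [Finset.mem_powersetCard] at hS
  exact Finset.card_pos.mp (by omega)

noncomputable def medMM (n : ℕ) (v : Fin (2*n+1) → ℝ) : ℝ :=
  ((Finset.powersetCard (n+1) (Finset.univ : Finset (Fin (2*n+1)))).attach).inf'
    (Finset.attach_nonempty_iff.mpr (powersetCard_ne n))
    (fun S => S.1.sup' (mem_powersetCard_ne S.2) v)

lemma inter_ne {n : ℕ} (S F : Finset (Fin (2*n+1))) (hS : n+1 ≤ S.card)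
    (hF : n+1 ≤ F.card) : (S ∩ F).Nonempty := by
  rw [← Finset.card_pos]
  have h1 := Finset.card_union_add_card_inter S F
  have h2 : (S ∪ F).card ≤ 2*n+1 := by
    have := Finset.card_le_univ (S ∪ F)
    simpa using this
  omega

lemma medMM_eq (n : ℕ) (v : Fin (2*n+1) → ℝ) : medianR n v = medMM n v := by
  apply le_antisymm
  · -- medianR ≤ every sup'
    apply Finset.le_inf'
    intro S _
    obtain ⟨i, hi⟩ := inter_ne S.1 (Finset.univ.filter (fun i => medianR n v ≤ v i))
      (by have := (Finset.mem_powersetCard.mp S.2).2; omega) (card_ge_median n v)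
    rw [Finset.mem_inter, Finset.mem_filter] at hi
    exact le_trans hi.2.2 (Finset.le_sup' v hi.1)
  · -- some S₀ with sup' ≤ medianR
    obtain ⟨S₀, hsub, hcard⟩ := Finset.exists_subset_card_eq (card_le_median n v)
    have hmem : S₀ ∈ Finset.powersetCard (n+1) (Finset.univ : Finset (Fin (2*n+1))) :=
      Finset.mem_powersetCard.mpr ⟨Finset.subset_univ _, hcard⟩
    rw [medMM]
    have hsup : S₀.sup' (mem_powersetCard_ne hmem) v ≤ medianR n v := by
      apply Finset.sup'_le
      intro i hi
      exact (Finset.mem_filter.mp (hsub hi)).2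
    exact Finset.inf'_le_of_le
      (f := fun S : {x // x ∈ Finset.powersetCard (n+1) (Finset.univ : Finset (Fin (2*n+1)))} =>
        S.1.sup' (mem_powersetCard_ne S.2) v)
      (b := (⟨S₀, hmem⟩ : {x // x ∈ Finset.powersetCard (n+1) (Finset.univ : Finset (Fin (2*n+1)))}))
      (Finset.mem_attach _ _) hsup

lemma merge_lt {n : ℕ} (x : Fin n → ℝ) (y : Fin (n+1) → ℝ) (i : Fin (2*n+1))
    (h : (i : ℕ) < n) : mergeVR n x y i = x ⟨i, h⟩ := dif_pos h

lemma merge_ge {n : ℕ} (x : Fin n → ℝ) (y : Fin (n+1) → ℝ) (i : Fin (2*n+1))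
    (h : ¬ (i : ℕ) < n) : mergeVR n x y i = y ⟨(i : ℕ) - n, by have := i.isLt; omega⟩ :=
  dif_neg h

lemma merge_cont (n : ℕ) (x : Fin n → ℝ) (f : Fin (n+1) → ℝ → ℝ)
    (hcont : ∀ k, ContinuousOn (f k) (Set.Icc 0 1)) :
    ContinuousOn (fun t => medianR n (mergeVR n x (fun k => f k t))) (Set.Icc (0:ℝ) 1) := by
  have heq : (fun t => medianR n (mergeVR n x (fun k => f k t)))
      = fun t => medMM n (mergeVR n x (fun k => f k t)) :=
    funext fun t => medMM_eq n _
  rw [heq]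
  simp only [medMM]
  apply ContinuousOn.finset_inf'_apply
  intro S _
  apply ContinuousOn.finset_sup'_apply
  intro i _
  by_cases h : (i : ℕ) < n
  · simp only [merge_lt _ _ _ h]
    exact continuousOn_const
  · simp only [merge_ge _ _ _ h]
    exact hcont _

lemma card_Ici_n (n : ℕ) :
    (Finset.Ici (⟨n, by omega⟩ : Fin (2*n+1))).card = n + 1 := by
  rw [Fin.card_Ici]
  simp
  omega

lemma median_nonneg (n : ℕ) (x : Fin n → ℝ) (y : Fin (n+1) → ℝ)
    (hx : ∀ i, 0 ≤ x i) (hy : ∀ k, 0 ≤ y k) : 0 ≤ medianR n (mergeVR n x y) := by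
  apply le_median
  have : (Finset.univ : Finset (Fin (2*n+1))).filter (fun i => (0:ℝ) ≤ mergeVR n x y i)
      = Finset.univ := by
    apply Finset.filter_true_of_mem
    intro i _
    by_cases h : (i : ℕ) < n
    · rw [merge_lt _ _ _ h]; exact hx _
    · rw [merge_ge _ _ _ h]; exact hy _
  rw [this, Finset.card_univ]
  simp; omega

lemma median_merge_zero (n : ℕ) (x : Fin n → ℝ) (y : Fin (n+1) → ℝ)
    (hx : ∀ i, 0 ≤ x i) (hy : ∀ k, y k = 0) : medianR n (mergeVR n x y) = 0 := by
  apply le_antisymm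
  · apply median_le
    calc n+1 = (Finset.Ici (⟨n, by omega⟩ : Fin (2*n+1))).card := (card_Ici_n n).symm
    _ ≤ _ := by
        apply Finset.card_le_card
        intro i hi
        rw [Finset.mem_Ici, Fin.le_def] at hi
        simp only [Finset.mem_filter, Finset.mem_univ, true_and]
        rw [merge_ge _ _ _ (by simpa using hi)]
        rw [hy]
  · exact median_nonneg n x y hx (fun k => le_of_eq (hy k).symm)

def embV (n : ℕ) : Fin n ↪ Fin (2*n+1) :=
  ⟨fun i => ⟨i.val, by omega⟩, fun a b hab => Fin.ext (by simpa using congrArg Fin.val hab)⟩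

lemma embV_val {n : ℕ} (i : Fin n) : ((embV n i : Fin (2*n+1)) : ℕ) = (i : ℕ) := rfl

lemma median_lb (n b : ℕ) (hn : 0 < n) (q : Fin n → ℝ) (y : Fin (n+1) → ℝ)
    (hq : ∀ i, 0 ≤ q i) (hy0 : ∀ k, 0 ≤ y k)
    (hy : ∀ k : Fin (n+1), (b:ℝ) * ((n:ℝ) - (k:ℕ)) / n ≤ y k) :
    (b:ℝ) * (((Finset.univ.filter
        (fun i => medianR n (mergeVR n q y) < q i)).card : ℕ) : ℝ) / n
      ≤ medianR n (mergeVR n q y) := by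
  set med := medianR n (mergeVR n q y) with hmed
  set T := Finset.univ.filter (fun i => med < q i) with hTdef
  set d := T.card with hd
  have hdn : d ≤ n := by
    calc d ≤ (Finset.univ : Finset (Fin n)).card := Finset.card_filter_le _ _
    _ = n := by simp
  rcases Nat.eq_zero_or_pos d with h0 | hdpos
  · rw [h0]
    simpa using median_nonneg n q y hq hy0
  · have hT : T.Nonempty := Finset.card_pos.mp hdpos
    set μ := T.inf' hT q with hμdef
    by_contra hc
    push_neg at hc
    have hμ : med < μ := (Finset.lt_inf'_iff hT).mpr (fun i hi => (Finset.mem_filter.mp hi).2)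
    set x := min ((b:ℝ) * d / n) μ with hx
    have hxmed : x ≤ med := by
      apply le_median
      set K := Finset.Icc (⟨n, by omega⟩ : Fin (2*n+1)) (⟨n + (n - d), by omega⟩) with hK
      have hdisj : Disjoint (T.map (embV n)) K := by
        rw [Finset.disjoint_left]
        intro a ha haK
        rw [Finset.mem_map] at ha
        obtain ⟨i, _, rfl⟩ := ha
        rw [hK, Finset.mem_Icc, Fin.le_def, Fin.le_def] at haK
        have h1 := haK.1
        rw [embV_val] at h1
        simp only at h1
        omega
      have hcard : ((T.map (embV n)) ∪ K).card = n + 1 := by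
        rw [Finset.card_union_of_disjoint hdisj, Finset.card_map, hK, Fin.card_Icc]
        simp
        omega
      rw [← hcard]
      apply Finset.card_le_card
      intro a ha
      rw [Finset.mem_union] at ha
      simp only [Finset.mem_filter, Finset.mem_univ, true_and]
      rcases ha with ha | ha
      · rw [Finset.mem_map] at ha
        obtain ⟨i, hiT, rfl⟩ := ha
        have hlt : ((embV n i : Fin (2*n+1)) : ℕ) < n := by rw [embV_val]; exact i.isLt
        rw [merge_lt _ _ _ hlt]
        have heq : (⟨((embV n i : Fin (2*n+1)) : ℕ), hlt⟩ : Fin n) = i :=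
          Fin.ext (embV_val i)
        rw [heq]
        exact le_trans (min_le_right _ _) (Finset.inf'_le q hiT)
      · rw [hK, Finset.mem_Icc, Fin.le_def, Fin.le_def] at ha
        simp only at ha
        have hge : ¬ ((a : ℕ) < n) := by omega
        rw [merge_ge _ _ _ hge]
        refine le_trans (min_le_left _ _)
          (le_trans ?_ (hy ⟨(a:ℕ) - n, by have := a.isLt; omega⟩))
        simp only
        have h2 : ((a:ℕ) - n) + d ≤ n := by omega
        have h1 : (d:ℝ) ≤ (n:ℝ) - (((a:ℕ) - n : ℕ):ℝ) := by
          have := (Nat.cast_le (α := ℝ)).mpr h2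
          push_cast at this ⊢
          linarith
        gcongr
    exact absurd hxmed (not_le.mpr (lt_min hc hμ))

/-- Existence of a normalization time for any moving-phantom system. -/
theorem stmt2 (n m b : ℕ) (hn : 0 < n) (hm : 2 ≤ m) (hb : 0 < b)
    (p : Fin n → Fin m → ℝ)
    (hp1 : ∀ i j, 0 ≤ p i j ∧ p i j ≤ b)
    (hp2 : ∀ i, ∑ j, p i j = b)
    (f : Fin (n+1) → ℝ → ℝ)
    (hcont : ∀ k, ContinuousOn (f k) (Set.Icc 0 1))
    (hmono : ∀ k, MonotoneOn (f k) (Set.Icc 0 1))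
    (hrange : ∀ k, ∀ t ∈ Set.Icc (0:ℝ) 1, f k t ∈ Set.Icc (0:ℝ) b)
    (h0 : ∀ k, f k 0 = 0)
    (h1 : ∀ k : Fin (n+1), (b : ℝ) * ((n : ℝ) - (k : ℕ)) / n ≤ f k 1) :
    ∃ t ∈ Set.Icc (0:ℝ) 1,
      ∑ j, medianR n (mergeVR n (fun i => p i j) (fun k => f k t)) = b := by
  classical
  set g : ℝ → ℝ :=
    fun t => ∑ j, medianR n (mergeVR n (fun i => p i j) (fun k => f k t)) with hg
  have hgc : ContinuousOn g (Set.Icc 0 1) := by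
    apply continuousOn_finset_sum
    intro j _
    exact merge_cont n _ f hcont
  have hg0 : g 0 = 0 := by
    apply Finset.sum_eq_zero
    intro j _
    exact median_merge_zero n _ _ (fun i => (hp1 i j).1) (fun k => h0 k)
  have hg1 : (b:ℝ) ≤ g 1 := by
    by_contra hh
    push_neg at hh
    have hmem1 : (1:ℝ) ∈ Set.Icc (0:ℝ) 1 := by norm_num
    have hvote : ∀ i : Fin n, ∃ j,
        medianR n (mergeVR n (fun i => p i j) (fun k => f k 1)) < p i j := by
      intro i
      have := Finset.exists_lt_of_sum_lt (f := fun j =>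
        medianR n (mergeVR n (fun i => p i j) (fun k => f k 1))) (g := fun j => p i j)
        (by rw [hp2 i]; exact hh)
      obtain ⟨j, _, hj⟩ := this
      exact ⟨j, hj⟩
    set d : Fin m → ℕ := fun j =>
      (Finset.univ.filter (fun i =>
        medianR n (mergeVR n (fun i => p i j) (fun k => f k 1)) < p i j)).card with hdd
    have hsum_d : n ≤ ∑ j, d j := by
      have hswap : ∑ j, d j = ∑ i : Fin n, ∑ j,
          (if medianR n (mergeVR n (fun i => p i j) (fun k => f k 1)) < p i j
            then 1 else 0) := by
        simp only [hdd, Finset.card_filter]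
        rw [Finset.sum_comm]
      rw [hswap]
      have : ∀ i : Fin n, 1 ≤ ∑ j,
          (if medianR n (mergeVR n (fun i => p i j) (fun k => f k 1)) < p i j
            then 1 else 0) := by
        intro i
        obtain ⟨j, hj⟩ := hvote i
        calc 1 = (if medianR n (mergeVR n (fun i => p i j) (fun k => f k 1)) < p i j
            then 1 else 0) := by simp [hj]
        _ ≤ _ := Finset.single_le_sum (f := fun j =>
            (if medianR n (mergeVR n (fun i => p i j) (fun k => f k 1)) < p i j
              then 1 else 0)) (fun _ _ => Nat.zero_le _) (Finset.mem_univ j)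
      calc n = ∑ _i : Fin n, 1 := by simp
      _ ≤ _ := Finset.sum_le_sum (fun i _ => this i)
    have hlb : ∀ j, (b:ℝ) * (d j : ℝ) / n ≤
        medianR n (mergeVR n (fun i => p i j) (fun k => f k 1)) := by
      intro j
      exact median_lb n b hn _ _ (fun i => (hp1 i j).1)
        (fun k => (hrange k 1 hmem1).1) (fun k => h1 k)
    have hcon : (b:ℝ) ≤ g 1 := by
      have hn' : (0:ℝ) < n := by exact_mod_cast hn
      calc (b:ℝ) = (b:ℝ) * (n:ℝ) / n := by field_simp
      _ ≤ (b:ℝ) * ((∑ j, d j : ℕ) : ℝ) / n := by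
          have hcast : (n:ℝ) ≤ ((∑ j, d j : ℕ) : ℝ) := by exact_mod_cast hsum_d
          gcongr
      _ = ∑ j, (b:ℝ) * (d j : ℝ) / n := by
          rw [← Finset.sum_div, ← Finset.mul_sum]
          push_cast
          ring
      _ ≤ g 1 := Finset.sum_le_sum (fun j _ => hlb j)
    exact absurd hcon (not_le.mpr hh)
  have hb' : (b:ℝ) ∈ Set.Icc (g 0) (g 1) := ⟨by rw [hg0]; positivity, hg1⟩
  obtain ⟨t, ht, hgt⟩ := intermediate_value_Icc (by norm_num : (0:ℝ) ≤ 1) hgc hb'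
  exact ⟨t, ht, hgt⟩
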